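/- arXiv:1707.03137 — 4 statements merged into one kernel-verified Lean document; each statement's English description precedes it below -/
import Mathlib

section
/- Let V be a finite-dimensional real inner product space and let C, C' be convex cones in V with closure of C' contained in the closure of C minus C (i.e., C' ⊆ cl(C) \ C). Then the dimension of the linear span of C' is strictly less than the dimension of the linear span of C, provided C is nonempty and open in its span. -/
/-- If `C` is a nonempty convex cone in a finite-dimensional real inner product space,
open in its linear span, and `C'` is a nonempty convex cone contained in `cl(C) \ C`,
then the dimension of the span of `C'` is strictly smaller than that of `C`. -/
theorem cone_boundary_dim_lt {V : Type*} [NormedAddCommGroup V] [InnerProductSpace ℝ V]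
    [FiniteDimensional ℝ V] (C C' : Set V)
    (hCadd : ∀ x ∈ C, ∀ y ∈ C, x + y ∈ C)
    (hCsmul : ∀ x ∈ C, ∀ c : ℝ, 0 < c → c • x ∈ C)
    (hC'add : ∀ x ∈ C', ∀ y ∈ C', x + y ∈ C')
    (hC'smul : ∀ x ∈ C', ∀ c : ℝ, 0 < c → c • x ∈ C')
    (hCconv : Convex ℝ C) (hC'conv : Convex ℝ C')
    (hCne : C.Nonempty) (hC'ne : C'.Nonempty)
    (hopen : IsOpen ((↑) ⁻¹' C : Set (Submodule.span ℝ C)))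
    (hsub : C' ⊆ closure C \ C) :
    Module.finrank ℝ (Submodule.span ℝ C') < Module.finrank ℝ (Submodule.span ℝ C) := by
  have hC'clC : C' ⊆ closure C := fun x hx => (hsub hx).1
  have hWclosed : IsClosed ((Submodule.span ℝ C : Submodule ℝ V) : Set V) :=
    Submodule.closed_of_finiteDimensional _
  have hclW : closure C ⊆ (Submodule.span ℝ C : Set V) := by
    have := closure_mono (Submodule.subset_span (R := ℝ) (s := C))
    rwa [hWclosed.closure_eq] at this
  have hWle : Submodule.span ℝ C' ≤ Submodule.span ℝ C :=
    Submodule.span_le.mpr fun x hx => hclW (hC'clC hx)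
  rcases lt_or_eq_of_le hWle with h | h
  · exact Submodule.finrank_lt_finrank_of_lt h
  exfalso
  obtain ⟨x, hx⟩ := hCne
  have hxW' : x ∈ Submodule.span ℝ C' := by rw [h]; exact Submodule.subset_span hx
  -- decompose x = a - b with a, b ∈ C'
  have hdecomp : ∀ v, v ∈ Submodule.span ℝ C' → ∃ a ∈ C', ∃ b ∈ C', v = a - b := by
    intro v hv
    clear hxW' hx
    induction hv using Submodule.span_induction with
    | mem y hy => exact ⟨y + y, hC'add y hy y hy, y, hy, by abel⟩
    | zero =>
        obtain ⟨y, hy⟩ := hC'ne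
        exact ⟨y, hy, y, hy, by abel⟩
    | add y z _ _ ihy ihz =>
        obtain ⟨a, ha, b, hb, rfl⟩ := ihy
        obtain ⟨c, hc, d, hd, rfl⟩ := ihz
        exact ⟨a + c, hC'add a ha c hc, b + d, hC'add b hb d hd, by abel⟩
    | smul c y _ ihy =>
        obtain ⟨a, ha, b, hb, rfl⟩ := ihy
        rcases lt_trichotomy c 0 with hc | hc | hc
        · refine ⟨(-c) • b, hC'smul b hb _ (by linarith), (-c) • a,
            hC'smul a ha _ (by linarith), ?_⟩
          simp [smul_sub]
          abel
        · obtain ⟨y, hy⟩ := hC'ne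
          exact ⟨y, hy, y, hy, by simp [hc]⟩
        · exact ⟨c • a, hC'smul a ha c hc, c • b, hC'smul b hb c hc, by
            simp [smul_sub]⟩
  obtain ⟨a, ha, b, hb, hab⟩ := hdecomp x hxW'
  -- key: C + closure C ⊆ C
  have key : ∀ y ∈ C, ∀ z, z ∈ closure C → y + z ∈ C := by
    intro y hy z hz
    set W := Submodule.span ℝ C with hW
    have hyW : y ∈ W := Submodule.subset_span hy
    have hzW : z ∈ W := hclW hz
    set D : Set W := (↑) ⁻¹' C with hD
    have hDconv : Convex ℝ D := by
      intro p hp q hq α β hα hβ hs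
      show ((α • p + β • q : W) : V) ∈ C
      push_cast
      exact hCconv hp hq hα hβ hs
    have hemb : Topology.IsEmbedding ((↑) : W → V) := Topology.IsEmbedding.subtypeVal
    have hzD : (⟨z, hzW⟩ : W) ∈ closure D := by
      rw [hemb.closure_eq_preimage_closure_image]
      refine Set.mem_preimage.mpr (closure_mono ?_ hz)
      intro c hc
      exact ⟨⟨c, Submodule.subset_span hc⟩, hc, rfl⟩
    have hyD : (⟨y, hyW⟩ : W) ∈ interior D := by
      rw [hopen.interior_eq]; exact hy
    have hmid := hDconv.combo_interior_closure_mem_interior hyD hzD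
      (by norm_num : (0:ℝ) < 1/2) (by norm_num : (0:ℝ) ≤ 1/2) (by norm_num)
    rw [hopen.interior_eq] at hmid
    have hmidC : (1/2 : ℝ) • y + (1/2 : ℝ) • z ∈ C := by
      have : (((1/2 : ℝ) • (⟨y, hyW⟩ : W) + (1/2 : ℝ) • (⟨z, hzW⟩ : W) : W) : V) ∈ C := hmid
      push_cast at this
      exact this
    have := hCsmul _ hmidC 2 (by norm_num)
    rwa [smul_add, smul_smul, smul_smul, show (2:ℝ) * (1/2) = 1 by norm_num, one_smul,
      one_smul] at this
  have haC : a ∈ C := by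
    have := key x hx b (hC'clC hb)
    rwa [hab, sub_add_cancel] at this
  exact (hsub ha).2 haC
end

section
/- The fundamental region C⁽ⁿ⁾ for the diagonal action of a finite reflection group W on Vⁿ is a convex subset of Vⁿ. -/
open scoped RealInnerProductSpace

variable {V : Type*} [NormedAddCommGroup V] [InnerProductSpace ℝ V] [FiniteDimensional ℝ V]

/-- Orthogonal reflection in the (nonzero) vector `α`. -/
noncomputable def sref (α : V) : V ≃ₗᵢ[ℝ] V := Submodule.reflection (ℝ ∙ α)ᗮ

/-- The cone of nonnegative linear combinations of a finite set `Pi`. -/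
def posCone (Pi : Finset V) : Set V :=
  {v | ∃ c : V → ℝ, (∀ x, 0 ≤ c x) ∧ v = ∑ x ∈ Pi, c x • x}

/-- The reflection group generated by the reflections in the roots of `Φ`. -/
noncomputable def Wgroup (Φ : Set V) : Subgroup (V ≃ₗᵢ[ℝ] V) :=
  Subgroup.closure {g | ∃ α ∈ Φ, g = sref α}

/-- The fundamental chamber of the reflection subgroup (given as a set of isometries
`Wsub`), with respect to its positive system inherited from `Φ₊ = Φ ∩ posCone Pi`. -/
def chamber (Φ : Set V) (Pi : Finset V) (Wsub : Set (V ≃ₗᵢ[ℝ] V)) : Set V :=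
  {u | ∀ α ∈ Φ, sref α ∈ Wsub → α ∈ posCone Pi → 0 ≤ ⟪u, α⟫}

/-- Pointwise stabilizer in `W` of the first `m` coordinates of the tuple `v`. -/
def stabSet (Φ : Set V) {n : ℕ} (v : Fin n → V) (m : ℕ) : Set (V ≃ₗᵢ[ℝ] V) :=
  {w | w ∈ Wgroup Φ ∧ ∀ i : Fin n, (i : ℕ) < m → w (v i) = v i}

/-- The fundamental region `C⁽ⁿ⁾` for the diagonal `W`-action on `Vⁿ`. -/
def Cfund (Φ : Set V) (Pi : Finset V) (n : ℕ) : Set (Fin n → V) :=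
  {v | ∀ m : Fin n, v m ∈ chamber Φ Pi (stabSet Φ v (m : ℕ))}

/-- The fundamental region `C⁽ⁿ⁾` for the diagonal action of `W` on `Vⁿ` is convex. -/
theorem fund_region_convex (Φ : Set V) (Pi : Finset V)
    (hfin : Φ.Finite) (h0 : (0 : V) ∉ Φ)
    (hrefl : ∀ α ∈ Φ, ∀ β ∈ Φ, sref α β ∈ Φ)
    (hred : ∀ α ∈ Φ, ∀ c : ℝ, c • α ∈ Φ → c = 1 ∨ c = -1)
    (hPiΦ : (Pi : Set V) ⊆ Φ)
    (hind : LinearIndependent ℝ (fun x : {x : V // x ∈ Pi} => (x : V)))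
    (hsplit : ∀ β ∈ Φ, β ∈ posCone Pi ∨ -β ∈ posCone Pi)
    (n : ℕ) :
    Convex ℝ (Cfund Φ Pi n) := by
  have fix_iff : ∀ α x : V, sref α x = x ↔ ⟪x, α⟫ = 0 := by
    intro α x
    rw [sref, Submodule.reflection_eq_self_iff, Submodule.mem_orthogonal_singleton_iff_inner_right,
      real_inner_comm]
  intro u hu v hv a b ha hb hab
  rcases eq_or_lt_of_le ha with ha0 | hapos
  · have : a • u + b • v = v := by
      have hb1 : b = 1 := by linarith
      funext i; simp [← ha0, hb1]
    rw [this]; exact hv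
  rcases eq_or_lt_of_le hb with hb0 | hbpos
  · have : a • u + b • v = u := by
      have ha1 : a = 1 := by linarith
      funext i; simp [← hb0, ha1]
    rw [this]; exact hu
  intro m α hαΦ hαstab hαpos
  -- `sref α` fixes every prefix coordinate of both `u` and `v`.
  have key : ∀ k : ℕ, k ≤ (m : ℕ) → ∀ i : Fin n, (i : ℕ) < k →
      ⟪u i, α⟫ = 0 ∧ ⟪v i, α⟫ = 0 := by
    intro k
    induction k with
    | zero => intro _ i hi; exact absurd hi (Nat.not_lt_zero _)
    | succ k ih =>
      intro hk i hi
      rcases Nat.lt_succ_iff_lt_or_eq.mp hi with h | h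
      · exact ih (le_trans (Nat.le_succ k) hk) i h
      · have hsu : sref α ∈ stabSet Φ u (i : ℕ) :=
          ⟨hαstab.1, fun j hj =>
            (fix_iff α (u j)).mpr (ih (le_trans (Nat.le_succ k) hk) j (h ▸ hj)).1⟩
        have hsv : sref α ∈ stabSet Φ v (i : ℕ) :=
          ⟨hαstab.1, fun j hj =>
            (fix_iff α (v j)).mpr (ih (le_trans (Nat.le_succ k) hk) j (h ▸ hj)).2⟩
        have h1 : 0 ≤ ⟪u i, α⟫ := hu i α hαΦ hsu hαpos
        have h2 : 0 ≤ ⟪v i, α⟫ := hv i α hαΦ hsv hαpos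
        have h3 : a * ⟪u i, α⟫ + b * ⟪v i, α⟫ = 0 := by
          have hfix := hαstab.2 i (lt_of_lt_of_le hi hk)
          rw [fix_iff] at hfix
          simpa [inner_add_left, real_inner_smul_left] using hfix
        have hax : a * ⟪u i, α⟫ = 0 :=
          le_antisymm (by nlinarith) (mul_nonneg ha h1)
        have hbx : b * ⟪v i, α⟫ = 0 := by linarith
        exact ⟨(mul_eq_zero.mp hax).resolve_left (ne_of_gt hapos),
          (mul_eq_zero.mp hbx).resolve_left (ne_of_gt hbpos)⟩
  have hsu : sref α ∈ stabSet Φ u (m : ℕ) :=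
    ⟨hαstab.1, fun j hj => (fix_iff α (u j)).mpr (key _ le_rfl j hj).1⟩
  have hsv : sref α ∈ stabSet Φ v (m : ℕ) :=
    ⟨hαstab.1, fun j hj => (fix_iff α (v j)).mpr (key _ le_rfl j hj).2⟩
  have h1 : 0 ≤ ⟪u m, α⟫ := hu m α hαΦ hsu hαpos
  have h2 : 0 ≤ ⟪v m, α⟫ := hv m α hαΦ hsv hαpos
  show 0 ≤ ⟪(a • u + b • v) m, α⟫
  have : ⟪(a • u + b • v) m, α⟫ = a * ⟪u m, α⟫ + b * ⟪v m, α⟫ := by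
    simp [inner_add_left, real_inner_smul_left]
  rw [this]
  nlinarith
end

section
/- Let u = (u₁,…,uₙ) and v = (v₁,…,vₙ) be points of the fundamental region C⁽ⁿ⁾ for the diagonal W-action on Vⁿ, and let 0 < t < 1. Then for every m ≤ n, the pointwise stabilizer in W of the first m coordinates of tu + (1−t)v equals the intersection of the pointwise stabilizers of the first m coordinates of u and of v: W_{tu+(1−t)v, m} = W_{u,m} ∩ W_{v,m}. -/
open scoped RealInnerProductSpace

variable {V : Type*} [NormedAddCommGroup V] [InnerProductSpace ℝ V] [FiniteDimensional ℝ V]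

set_option linter.unusedSectionVars false
set_option linter.unusedVariables false

lemma sref_apply' (α x : V) : sref α x = x - (2 * ⟪x, α⟫ / ⟪α, α⟫) • α := by
  show Submodule.reflection (ℝ ∙ α)ᗮ x = _
  rw [Submodule.reflection_apply]
  have h := Submodule.starProjection_add_starProjection_orthogonal (K := ℝ ∙ α) x
  have h2 : ((ℝ ∙ α)ᗮ.starProjection x : V) = x - ((ℝ ∙ α).starProjection x : V) := by
    exact eq_sub_of_add_eq' h
  rw [h2, Submodule.starProjection_singleton]
  have h3 : ⟪α, x⟫ = ⟪x, α⟫ := real_inner_comm _ _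
  have h4 : ((‖α‖:ℝ)^2) = ⟪α, α⟫ := (real_inner_self_eq_norm_sq α).symm
  rw [h3, h4, two_smul]
  rw [show (2 * ⟪x, α⟫ / ⟪α, α⟫) = ⟪x, α⟫ / ⟪α, α⟫ + ⟪x, α⟫ / ⟪α, α⟫ by ring, add_smul]
  abel

set_option linter.unusedSectionVars false

lemma sref_self' (α : V) : sref α α = -α :=
  Submodule.reflection_mem_subspace_orthogonal_precomplement_eq_neg (Submodule.mem_span_singleton_self α)

lemma sref_fix {α x : V} (h : ⟪x, α⟫ = 0) : sref α x = x := by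
  rw [sref_apply', h]; simp

lemma sref_fix_iff {α x : V} (hα : α ≠ 0) : sref α x = x ↔ ⟪x, α⟫ = 0 := by
  refine ⟨fun h => ?_, sref_fix⟩
  rw [sref_apply'] at h
  have h2 : (2 * ⟪x, α⟫ / ⟪α, α⟫) • α = 0 := sub_eq_self.mp h
  rcases smul_eq_zero.mp h2 with hc | h0
  · have hαα : ⟪α, α⟫ ≠ 0 := inner_self_ne_zero.mpr hα
    rcases div_eq_zero_iff.mp hc with h' | h'
    · linarith
    · exact absurd h' hαα
  · exact absurd h0 hα

lemma sref_sq (α : V) : sref α * sref α = 1 := by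
  apply LinearIsometryEquiv.ext; intro x
  exact Submodule.reflection_reflection (ℝ ∙ α)ᗮ x

lemma sref_neg_eq (α : V) : sref (-α) = sref α := by
  apply LinearIsometryEquiv.ext; intro x
  rw [sref_apply', sref_apply']
  simp [inner_neg_right, inner_neg_left, neg_div, neg_smul, smul_neg]

lemma sref_conj (w : V ≃ₗᵢ[ℝ] V) (α : V) : sref (w α) = w * sref α * w⁻¹ := by
  apply LinearIsometryEquiv.ext; intro x
  simp only [LinearIsometryEquiv.coe_mul, Function.comp_apply, LinearIsometryEquiv.coe_inv]
  rw [sref_apply', sref_apply', map_sub, map_smul]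
  rw [show ⟪(w.symm x : V), α⟫ = ⟪x, w α⟫ by rw [← w.inner_map_map (w.symm x) α, w.apply_symm_apply]]
  rw [w.apply_symm_apply, w.inner_map_map]



lemma posCone_zero (T : Finset V) : (0:V) ∈ posCone T :=
  ⟨0, fun _ => le_refl 0, by simp⟩

lemma posCone_mem_self {T : Finset V} {x : V} (hx : x ∈ T) : x ∈ posCone T := by
  classical
  refine ⟨fun y => if y = x then 1 else 0, fun y => by positivity, ?_⟩
  simp [ite_smul, Finset.sum_ite_eq', hx]

lemma posCone_add {T : Finset V} {x y : V} (hx : x ∈ posCone T) (hy : y ∈ posCone T) :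
    x + y ∈ posCone T := by
  obtain ⟨c, hc, rfl⟩ := hx; obtain ⟨d, hd, rfl⟩ := hy
  exact ⟨c + d, fun z => add_nonneg (hc z) (hd z), by simp [add_smul, Finset.sum_add_distrib]⟩

lemma posCone_smul {T : Finset V} {x : V} {r : ℝ} (hr : 0 ≤ r) (hx : x ∈ posCone T) :
    r • x ∈ posCone T := by
  obtain ⟨c, hc, rfl⟩ := hx
  exact ⟨fun z => r * c z, fun z => mul_nonneg hr (hc z),
    by rw [Finset.smul_sum]; simp [smul_smul]⟩

lemma posCone_trans {T S : Finset V} (h : ∀ x ∈ T, x ∈ posCone S) : posCone T ⊆ posCone S := by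
  rintro v ⟨c, hc, rfl⟩
  refine Finset.sum_induction _ (· ∈ posCone S) (fun _ _ => posCone_add) (posCone_zero S) ?_
  intro x hx
  exact posCone_smul (hc x) (h x hx)

lemma exists_pos_functional (Pi : Finset V)
    (hind : LinearIndependent ℝ (fun x : {x : V // x ∈ Pi} => (x : V))) :
    ∃ f : V →ₗ[ℝ] ℝ, ∀ x ∈ Pi, f x = 1 := by
  classical
  have hind' : LinearIndepOn ℝ id (↑Pi : Set V) := hind
  let B := Module.Basis.extend hind'
  refine ⟨∑ x ∈ Pi.attach, B.coord ⟨x.1, hind'.subset_extend (Set.subset_univ _) x.2⟩, ?_⟩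
  intro y hy
  rw [LinearMap.coe_sum, Finset.sum_apply]
  have hyB : y = B ⟨y, hind'.subset_extend (Set.subset_univ _) hy⟩ := by
    simp [B, Module.Basis.extend_apply_self]
  have step : ∀ x ∈ Pi.attach,
      B.coord ⟨x.1, hind'.subset_extend (Set.subset_univ _) x.2⟩ y
        = if x = ⟨y, hy⟩ then 1 else 0 := by
    rintro ⟨x, hx⟩ -
    have h5 := (congrArg B.repr hyB).trans (B.repr_self _)
    rw [Module.Basis.coord_apply, h5, Finsupp.single_apply]
    simp [Subtype.ext_iff]
    rcases eq_or_ne x y with h' | h'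
    · simp [h']
    · simp [h', Ne.symm h']
  rw [Finset.sum_congr rfl step]
  simp
lemma posCone_sum_mem {S T : Finset V} (hTS : ∀ x ∈ T, x ∈ posCone S) (c : V → ℝ)
    (hc : ∀ x ∈ T, 0 ≤ c x) : (∑ x ∈ T, c x • x) ∈ posCone S := by
  classical
  rw [← Finset.sum_attach T (fun x => c x • x)]
  refine Finset.sum_induction _ (· ∈ posCone S) (fun _ _ => posCone_add) (posCone_zero S) ?_
  rintro ⟨x, hx⟩ -
  exact posCone_smul (hc x hx) (hTS x hx)

section main
attribute [local instance] Classical.propDecidable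

variable {Φ : Set V} {Pi : Finset V} {f : V →ₗ[ℝ] ℝ} {Φ' : Set V} {D : Finset V}

lemma f_apply_posCone (hf1 : ∀ x ∈ Pi, f x = 1) {x : V} (hx : x ∈ posCone Pi) :
    (0 ≤ f x) ∧ (x ≠ 0 → 0 < f x) := by
  obtain ⟨c, hc, rfl⟩ := hx
  rw [map_sum]
  have hterm : ∀ y ∈ Pi, f (c y • y) = c y := fun y hy => by
    rw [map_smul, hf1 y hy]; simp
  rw [Finset.sum_congr rfl hterm]
  have h1 : 0 ≤ ∑ y ∈ Pi, c y := Finset.sum_nonneg fun y _ => hc y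
  refine ⟨h1, fun hx0 => ?_⟩
  rcases h1.lt_or_eq with h | h
  · exact h
  · exfalso; apply hx0
    have h2 := (Finset.sum_eq_zero_iff_of_nonneg (fun y _ => hc y)).mp h.symm
    exact Finset.sum_eq_zero fun y hy => by rw [h2 y hy, zero_smul]

lemma f_pos (h0 : (0:V) ∉ Φ) (hf1 : ∀ x ∈ Pi, f x = 1) {α : V} (hα : α ∈ Φ)
    (hαp : α ∈ posCone Pi) : 0 < f α :=
  (f_apply_posCone hf1 hαp).2 (fun h => h0 (h ▸ hα))

lemma f_neg (h0 : (0:V) ∉ Φ) (hsplit : ∀ β ∈ Φ, β ∈ posCone Pi ∨ -β ∈ posCone Pi)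
    (hf1 : ∀ x ∈ Pi, f x = 1) {α : V} (hα : α ∈ Φ)
    (hαp : α ∉ posCone Pi) : -α ∈ posCone Pi ∧ f α < 0 := by
  rcases hsplit α hα with h | h
  · exact absurd h hαp
  · have : (0:ℝ) < f (-α) := (f_apply_posCone hf1 h).2 (by
      intro h'; exact h0 (show (0:V) ∈ Φ from (neg_eq_zero.mp h') ▸ hα))
    rw [map_neg] at this
    exact ⟨h, by linarith⟩

lemma pos_of_f_pos (h0 : (0:V) ∉ Φ) (hsplit : ∀ β ∈ Φ, β ∈ posCone Pi ∨ -β ∈ posCone Pi)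
    (hf1 : ∀ x ∈ Pi, f x = 1) {α : V} (hα : α ∈ Φ) (h : 0 < f α) : α ∈ posCone Pi := by
  by_contra hn
  exact absurd h (not_lt.mpr (le_of_lt (f_neg h0 hsplit hf1 hα hn).2))

/-- Existence of a minimal positively-spanning subset of the positive system of `Φ'`. -/
lemma exists_simple (hfin : Φ.Finite) (hΦ'sub : Φ' ⊆ Φ) :
    ∃ D : Finset V, (↑D : Set V) ⊆ Φ' ∩ posCone Pi ∧ (Φ' ∩ posCone Pi ⊆ posCone D) ∧
      ∀ E : Finset V, (↑E : Set V) ⊆ Φ' ∩ posCone Pi → Φ' ∩ posCone Pi ⊆ posCone E →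
        D.card ≤ E.card := by
  classical
  have hP'fin : (Φ' ∩ posCone Pi).Finite :=
    (hfin.subset hΦ'sub).subset Set.inter_subset_left
  set P := hP'fin.toFinset with hP
  have hPmem : (↑P : Set V) = Φ' ∩ posCone Pi := by simp [hP]
  have hPcov : Φ' ∩ posCone Pi ⊆ posCone P := fun x hx =>
    posCone_mem_self (by rw [← Finset.mem_coe, hPmem]; exact hx)
  obtain ⟨D, hD, hDmin⟩ := Finset.exists_min_image
    (P.powerset.filter (fun E => Φ' ∩ posCone Pi ⊆ posCone E)) Finset.card
    ⟨P, by simp [hPcov]⟩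
  rw [Finset.mem_filter, Finset.mem_powerset] at hD
  refine ⟨D, ?_, hD.2, ?_⟩
  · rw [← hPmem]; exact_mod_cast hD.1
  · intro E hE1 hE2
    refine hDmin E ?_
    rw [Finset.mem_filter, Finset.mem_powerset]
    exact ⟨by rw [← Finset.coe_subset, hPmem]; exact hE1, hE2⟩

/-- Minimality: no element of `D` is a positive combination of the others. -/
lemma simple_drop
    (hD1 : (↑D : Set V) ⊆ Φ' ∩ posCone Pi) (hD2 : Φ' ∩ posCone Pi ⊆ posCone D)
    (hDmin : ∀ E : Finset V, (↑E : Set V) ⊆ Φ' ∩ posCone Pi → Φ' ∩ posCone Pi ⊆ posCone E →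
        D.card ≤ E.card)
    {x : V} (hx : x ∈ D) (hmem : x ∈ posCone (D.erase x)) : False := by
  classical
  have hcov : Φ' ∩ posCone Pi ⊆ posCone (D.erase x) := by
    refine hD2.trans (posCone_trans ?_)
    intro y hy
    rcases eq_or_ne y x with rfl | hne
    · exact hmem
    · exact posCone_mem_self (Finset.mem_erase.mpr ⟨hne, hy⟩)
  have := hDmin (D.erase x) ((Finset.coe_subset.2 (Finset.erase_subset x D)).trans hD1) hcov
  rw [Finset.card_erase_of_mem hx] at this
  have hpos : 0 < D.card := Finset.card_pos.mpr ⟨x, hx⟩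
  omega
end main
section main2
attribute [local instance] Classical.propDecidable
variable {Φ : Set V} {Pi : Finset V} {f : V →ₗ[ℝ] ℝ} {Φ' : Set V} {D : Finset V}

lemma simple_obtuse (h0 : (0:V) ∉ Φ)
    (hsplit : ∀ β ∈ Φ, β ∈ posCone Pi ∨ -β ∈ posCone Pi)
    (hf1 : ∀ x ∈ Pi, f x = 1)
    (hΦ'sub : Φ' ⊆ Φ) (hΦ'cl : ∀ α ∈ Φ', ∀ β ∈ Φ', sref α β ∈ Φ')
    (hD1 : (↑D : Set V) ⊆ Φ' ∩ posCone Pi) (hD2 : Φ' ∩ posCone Pi ⊆ posCone D)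
    (hDmin : ∀ E : Finset V, (↑E : Set V) ⊆ Φ' ∩ posCone Pi → Φ' ∩ posCone Pi ⊆ posCone E →
        D.card ≤ E.card) :
    ∀ α ∈ D, ∀ β ∈ D, α ≠ β → ⟪α, β⟫ ≤ 0 := by
  intro α hαD β hβD hne
  by_contra hp
  rw [not_le] at hp
  have hα' : α ∈ Φ' ∩ posCone Pi := hD1 (Finset.mem_coe.mpr hαD)
  have hβ' : β ∈ Φ' ∩ posCone Pi := hD1 (Finset.mem_coe.mpr hβD)
  have hαΦ : α ∈ Φ := hΦ'sub hα'.1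
  have hβΦ : β ∈ Φ := hΦ'sub hβ'.1
  have hα0 : α ≠ 0 := fun h => h0 (h ▸ hαΦ)
  have hβ0 : β ≠ 0 := fun h => h0 (h ▸ hβΦ)
  have hfα : 0 < f α := f_pos h0 hf1 hαΦ hα'.2
  have hfβ : 0 < f β := f_pos h0 hf1 hβΦ hβ'.2
  set c : ℝ := 2 * ⟪β, α⟫ / ⟪α, α⟫ with hcdef
  have hc : 0 < c := by
    have h1 : ⟪β, α⟫ = ⟪α, β⟫ := real_inner_comm _ _
    have h2 : (0:ℝ) < ⟪α, α⟫ :=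
      lt_of_le_of_ne real_inner_self_nonneg (Ne.symm (inner_self_ne_zero.mpr hα0))
    apply div_pos (by linarith) h2
  have hγ0 : sref α β = β - c • α := sref_apply' α β
  have hγ0Φ' : sref α β ∈ Φ' := hΦ'cl α hα'.1 β hβ'.1
  have hγ0Φ : sref α β ∈ Φ := hΦ'sub hγ0Φ'
  have hDpos : ∀ γ ∈ D, γ ∈ posCone Pi := fun γ hγ => (hD1 (Finset.mem_coe.mpr hγ)).2
  have hDf : ∀ γ ∈ D, 0 < f γ :=
    fun γ hγ => f_pos h0 hf1 (hΦ'sub (hD1 (Finset.mem_coe.mpr hγ)).1) (hDpos γ hγ)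
  by_cases hpos : sref α β ∈ posCone Pi
  · -- positive case
    obtain ⟨d, hd, hsum⟩ := hD2 ⟨hγ0Φ', hpos⟩
    rw [hγ0] at hsum
    have hsplitsum : ∑ γ ∈ D, d γ • γ = d β • β + ∑ γ ∈ D.erase β, d γ • γ :=
      (Finset.add_sum_erase D (fun γ => d γ • γ) hβD).symm
    set S := ∑ γ ∈ D.erase β, d γ • γ with hSdef
    have heq : β - c • α = d β • β + S := by rw [hsum, hsplitsum]
    have hSpos : S ∈ posCone Pi :=
      posCone_sum_mem (fun x hx => hDpos x (Finset.mem_of_mem_erase hx)) d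
        (fun x _ => hd x)
    have hfS : 0 ≤ f S := (f_apply_posCone hf1 hSpos).1
    rcases lt_or_ge (d β) 1 with hdβ | hdβ
    · -- β is a positive combination of the others : contradiction with minimality
      have heq2 : (1 - d β) • β = c • α + S := by
        have : β - c • α - d β • β = S := by rw [heq]; abel
        rw [← this]; rw [sub_smul, one_smul]; abel
      have hβmem : β ∈ posCone (D.erase β) := by
        have h1 : c • α + S ∈ posCone (D.erase β) := by
          refine posCone_add (posCone_smul hc.le ?_) ?_
          · exact posCone_mem_self (Finset.mem_erase.mpr ⟨hne, hαD⟩)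
          · exact posCone_sum_mem (fun x hx => posCone_mem_self hx) d (fun x _ => hd x)
        have h2 : β = (1 - d β)⁻¹ • (c • α + S) := by
          rw [← heq2, inv_smul_smul₀ (by linarith)]
        have h3 := posCone_smul (inv_nonneg.mpr (by linarith : (0:ℝ) ≤ 1 - d β)) h1
        rwa [← h2] at h3
      exact simple_drop hD1 hD2 hDmin hβD hβmem
    · -- apply f : contradiction
      have hfeq := congrArg f heq
      simp only [map_sub, map_add, map_smul, smul_eq_mul] at hfeq
      nlinarith [hfS, hfβ, hfα, hc, hdβ]
  · -- negative case
    obtain ⟨hneg, _⟩ := f_neg h0 hsplit hf1 hγ0Φ hpos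
    have hnegΦ' : -(sref α β) ∈ Φ' := by
      have := hΦ'cl _ hγ0Φ' _ hγ0Φ'
      rwa [sref_self'] at this
    obtain ⟨d, hd, hsum⟩ := hD2 ⟨hnegΦ', hneg⟩
    rw [hγ0] at hsum
    have hsum' : c • α - β = ∑ γ ∈ D, d γ • γ := by rw [← hsum]; abel
    have hsplitsum : ∑ γ ∈ D, d γ • γ = d α • α + ∑ γ ∈ D.erase α, d γ • γ :=
      (Finset.add_sum_erase D (fun γ => d γ • γ) hαD).symm
    set S := ∑ γ ∈ D.erase α, d γ • γ with hSdef
    have heq : c • α - β = d α • α + S := by rw [hsum', hsplitsum]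
    have hSpos : S ∈ posCone Pi :=
      posCone_sum_mem (fun x hx => hDpos x (Finset.mem_of_mem_erase hx)) d
        (fun x _ => hd x)
    have hfS : 0 ≤ f S := (f_apply_posCone hf1 hSpos).1
    rcases lt_or_ge (d α) c with hdα | hdα
    · have heq2 : (c - d α) • α = β + S := by
        have : c • α - β - d α • α = S := by rw [heq]; abel
        rw [← this]; rw [sub_smul]; abel
      have hαmem : α ∈ posCone (D.erase α) := by
        have h1 : β + S ∈ posCone (D.erase α) := by
          refine posCone_add ?_ ?_
          · exact posCone_mem_self (Finset.mem_erase.mpr ⟨hne.symm, hβD⟩)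
          · exact posCone_sum_mem (fun x hx => posCone_mem_self hx) d (fun x _ => hd x)
        have h2 : α = (c - d α)⁻¹ • (β + S) := by
          rw [← heq2, inv_smul_smul₀ (by linarith)]
        have h3 := posCone_smul (inv_nonneg.mpr (by linarith : (0:ℝ) ≤ c - d α)) h1
        rwa [← h2] at h3
      exact simple_drop hD1 hD2 hDmin hαD hαmem
    · have hfeq := congrArg f heq
      simp only [map_sub, map_add, map_smul, smul_eq_mul] at hfeq
      nlinarith [hfS, hfβ, hfα, hc, hdα]

lemma simple_indep (h0 : (0:V) ∉ Φ)
    (hf1 : ∀ x ∈ Pi, f x = 1)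
    (hΦ'sub : Φ' ⊆ Φ)
    (hD1 : (↑D : Set V) ⊆ Φ' ∩ posCone Pi)
    (hobtuse : ∀ α ∈ D, ∀ β ∈ D, α ≠ β → ⟪α, β⟫ ≤ 0) :
    ∀ a : V → ℝ, (∑ γ ∈ D, a γ • γ) = 0 → ∀ γ ∈ D, a γ = 0 := by
  intro a hzero
  classical
  have hDf : ∀ γ ∈ D, 0 < f γ :=
    fun γ hγ => f_pos h0 hf1 (hΦ'sub (hD1 (Finset.mem_coe.mpr hγ)).1)
      (hD1 (Finset.mem_coe.mpr hγ)).2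
  set P := D.filter (fun γ => 0 < a γ) with hPdef
  set N := D.filter (fun γ => ¬ 0 < a γ) with hNdef
  set σ := ∑ γ ∈ P, a γ • γ with hσdef
  set τ := ∑ γ ∈ N, (-a γ) • γ with hτdef
  have hστ : σ = τ := by
    have h1 : σ + ∑ γ ∈ N, a γ • γ = 0 := by
      rw [hσdef, Finset.sum_filter_add_sum_filter_not D _ (fun γ => a γ • γ)]
      exact hzero
    have h2 : τ = - ∑ γ ∈ N, a γ • γ := by
      rw [hτdef, ← Finset.sum_neg_distrib]
      exact Finset.sum_congr rfl fun γ _ => (neg_smul _ _)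
    exact (eq_neg_of_add_eq_zero_left h1).trans h2.symm
  have hσ0 : σ = 0 := by
    have hinner : ⟪σ, σ⟫ ≤ 0 := by
      nth_rewrite 2 [hστ]
      rw [hσdef, hτdef, sum_inner]
      refine Finset.sum_nonpos fun γ hγ => ?_
      rw [inner_sum]
      refine Finset.sum_nonpos fun δ hδ => ?_
      rw [real_inner_smul_left, real_inner_smul_right]
      have hγP := Finset.mem_filter.mp hγ
      have hδN := Finset.mem_filter.mp hδ
      have hne : γ ≠ δ := fun h => hδN.2 (h ▸ hγP.2)
      have h1 : ⟪γ, δ⟫ ≤ 0 := hobtuse γ hγP.1 δ hδN.1 hne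
      have h2 : 0 ≤ a γ * -a δ := mul_nonneg hγP.2.le (by linarith [not_lt.mp hδN.2])
      nlinarith
    exact real_inner_self_nonpos.mp hinner
  have hτ0 : τ = 0 := hστ ▸ hσ0
  have hfσ : ∑ γ ∈ P, a γ * f γ = 0 := by
    have h := hσ0; rw [hσdef] at h
    have := congrArg f h
    simpa only [map_sum, map_smul, smul_eq_mul, map_zero] using this
  have hfτ : ∑ γ ∈ N, (-a γ) * f γ = 0 := by
    have h := hτ0; rw [hτdef] at h
    have := congrArg f h
    simpa only [map_sum, map_smul, smul_eq_mul, map_zero] using this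
  intro γ hγ
  rcases lt_or_ge 0 (a γ) with h | h
  · exfalso
    have hγP : γ ∈ P := Finset.mem_filter.mpr ⟨hγ, h⟩
    have := (Finset.sum_eq_zero_iff_of_nonneg (fun δ hδ => by
      have hδP := Finset.mem_filter.mp hδ
      exact mul_nonneg hδP.2.le (hDf δ hδP.1).le)).mp hfσ γ hγP
    nlinarith [hDf γ hγ]
  · have hγN : γ ∈ N := Finset.mem_filter.mpr ⟨hγ, not_lt.mpr h⟩
    have := (Finset.sum_eq_zero_iff_of_nonneg (fun δ hδ => by
      have hδN := Finset.mem_filter.mp hδ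
      exact mul_nonneg (by linarith [not_lt.mp hδN.2]) (hDf δ hδN.1).le)).mp hfτ γ hγN
    have hfγ := hDf γ hγ
    nlinarith
end main2
section main3
attribute [local instance] Classical.propDecidable
variable {Φ : Set V} {Pi : Finset V} {f : V →ₗ[ℝ] ℝ} {Φ' : Set V} {D : Finset V}

/-- A simple reflection permutes the other positive roots of `Φ'`. -/
lemma sref_simple_pos (h0 : (0:V) ∉ Φ)
    (hred : ∀ α ∈ Φ, ∀ c : ℝ, c • α ∈ Φ → c = 1 ∨ c = -1)
    (hsplit : ∀ β ∈ Φ, β ∈ posCone Pi ∨ -β ∈ posCone Pi)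
    (hf1 : ∀ x ∈ Pi, f x = 1)
    (hΦ'sub : Φ' ⊆ Φ) (hΦ'cl : ∀ α ∈ Φ', ∀ β ∈ Φ', sref α β ∈ Φ')
    (hD1 : (↑D : Set V) ⊆ Φ' ∩ posCone Pi) (hD2 : Φ' ∩ posCone Pi ⊆ posCone D)
    (hindep : ∀ a : V → ℝ, (∑ γ ∈ D, a γ • γ) = 0 → ∀ γ ∈ D, a γ = 0)
    {α β : V} (hα : α ∈ D) (hβ : β ∈ Φ' ∩ posCone Pi) (hne : β ≠ α) :
    sref α β ∈ Φ' ∩ posCone Pi := by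
  have hα' : α ∈ Φ' ∩ posCone Pi := hD1 (Finset.mem_coe.mpr hα)
  have hαΦ : α ∈ Φ := hΦ'sub hα'.1
  have hβΦ : β ∈ Φ := hΦ'sub hβ.1
  have hγ0Φ' : sref α β ∈ Φ' := hΦ'cl α hα'.1 β hβ.1
  refine ⟨hγ0Φ', ?_⟩
  by_contra hpos
  obtain ⟨hneg, _⟩ := f_neg h0 hsplit hf1 (hΦ'sub hγ0Φ') hpos
  have hnegΦ' : -(sref α β) ∈ Φ' := by
    have := hΦ'cl _ hγ0Φ' _ hγ0Φ'
    rwa [sref_self'] at this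
  obtain ⟨c, hc, hβexp⟩ := hD2 hβ
  obtain ⟨d, hd, hdexp⟩ := hD2 ⟨hnegΦ', hneg⟩
  -- there is γ0 ∈ D, γ0 ≠ α with c γ0 > 0
  have hγ0ex : ∃ γ0 ∈ D, γ0 ≠ α ∧ 0 < c γ0 := by
    by_contra hno
    push_neg at hno
    have hβα : β = c α • α := by
      rw [hβexp]
      rw [Finset.sum_eq_single α (fun γ hγ hγα => ?_) (fun hαD => absurd hα hαD)]
      rcases (hc γ).lt_or_eq with h | h
      · exact absurd h (not_lt.mpr (hno γ hγ hγα))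
      · rw [← h, zero_smul]
    rcases hred α hαΦ (c α) (hβα ▸ hβΦ) with h1 | h1
    · exact hne (by rw [hβα, h1, one_smul])
    · have hfβ : 0 < f β := f_pos h0 hf1 hβΦ hβ.2
      have hfα : 0 < f α := f_pos h0 hf1 hαΦ hα'.2
      have : f β = -f α := by
        rw [hβα, h1, map_smul]; simp
      linarith
  obtain ⟨γ0, hγ0D, hγ0α, hcγ0⟩ := hγ0ex
  set k : ℝ := 2 * ⟪β, α⟫ / ⟪α, α⟫ with hkdef
  have hform : sref α β = β - k • α := sref_apply' α β
  have hsum0 : ∑ γ ∈ D, (c γ + d γ - (if γ = α then k else 0)) • γ = 0 := by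
    simp only [sub_smul, add_smul, ite_smul, zero_smul]
    rw [Finset.sum_sub_distrib, Finset.sum_add_distrib,
      Finset.sum_ite_eq' D α (fun γ => k • γ), if_pos hα, ← hβexp, ← hdexp, hform]
    abel
  have := hindep _ hsum0 γ0 hγ0D
  rw [if_neg hγ0α] at this
  have := hd γ0
  linarith

/-- Product of reflections along a word. -/
noncomputable def wprod (l : List V) : V ≃ₗᵢ[ℝ] V := (l.map sref).prod

@[simp] lemma wprod_nil : wprod ([] : List V) = 1 := rfl

@[simp] lemma wprod_cons (γ : V) (l : List V) : wprod (γ :: l) = sref γ * wprod l := by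
  simp [wprod]

lemma wprod_append (l r : List V) : wprod (l ++ r) = wprod l * wprod r := by
  simp [wprod]

lemma wprod_maps (hΦ'cl : ∀ α ∈ Φ', ∀ β ∈ Φ', sref α β ∈ Φ')
    (hD1 : (↑D : Set V) ⊆ Φ' ∩ posCone Pi) :
    ∀ l : List V, (∀ γ ∈ l, γ ∈ D) → ∀ β ∈ Φ', wprod l β ∈ Φ' := by
  intro l
  induction l with
  | nil => intro _ β hβ; simpa using hβ
  | cons γ r ih =>
    intro hl β hβ
    have h1 : wprod r β ∈ Φ' := ih (fun x hx => hl x (List.mem_cons_of_mem _ hx)) β hβ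
    have hγ : γ ∈ Φ' := (hD1 (Finset.mem_coe.mpr (hl γ (List.mem_cons_self)))).1
    simpa using hΦ'cl γ hγ _ h1

lemma sref_inv (α : V) : (sref α)⁻¹ = sref α :=
  inv_eq_of_mul_eq_one_left (sref_sq α)

lemma wprod_reverse (l : List V) : wprod l.reverse = (wprod l)⁻¹ := by
  induction l with
  | nil => simp
  | cons γ r ih =>
    rw [List.reverse_cons, wprod_append, ih, wprod_cons]
    simp [mul_inv_rev, sref_inv, wprod]

lemma wprod_mem_closure {S : Set V} : ∀ l : List V, (∀ γ ∈ l, γ ∈ S) →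
    wprod l ∈ Subgroup.closure {g | ∃ α ∈ S, g = sref α} := by
  intro l
  induction l with
  | nil => intro _; simpa using Subgroup.one_mem _
  | cons γ r ih =>
    intro hl
    rw [wprod_cons]
    exact Subgroup.mul_mem _
      (Subgroup.subset_closure ⟨γ, hl γ (List.mem_cons_self), rfl⟩)
      (ih (fun x hx => hl x (List.mem_cons_of_mem _ hx)))
end main3
section main4
attribute [local instance] Classical.propDecidable
variable {Φ : Set V} {Pi : Finset V} {f : V →ₗ[ℝ] ℝ} {Φ' : Set V} {D : Finset V}

lemma f_root_sign (h0 : (0:V) ∉ Φ) (hsplit : ∀ β ∈ Φ, β ∈ posCone Pi ∨ -β ∈ posCone Pi)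
    (hf1 : ∀ x ∈ Pi, f x = 1) {β : V} (hβ : β ∈ Φ) : 0 < f β ∨ f β < 0 := by
  rcases hsplit β hβ with h | h
  · exact Or.inl (f_pos h0 hf1 hβ h)
  · right
    have : (0:ℝ) < f (-β) := (f_apply_posCone hf1 h).2
      (fun h' => h0 ((neg_eq_zero.mp h') ▸ hβ))
    rw [map_neg] at this; linarith

lemma neg_mem_Φ' (hΦ'cl : ∀ α ∈ Φ', ∀ β ∈ Φ', sref α β ∈ Φ') {β : V} (hβ : β ∈ Φ') :
    -β ∈ Φ' := by
  have := hΦ'cl β hβ β hβ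
  rwa [sref_self'] at this

lemma orbit_step (h0 : (0:V) ∉ Φ)
    (hred : ∀ α ∈ Φ, ∀ c : ℝ, c • α ∈ Φ → c = 1 ∨ c = -1)
    (hsplit : ∀ β ∈ Φ, β ∈ posCone Pi ∨ -β ∈ posCone Pi)
    (hf1 : ∀ x ∈ Pi, f x = 1)
    (hΦ'sub : Φ' ⊆ Φ) (hΦ'cl : ∀ α ∈ Φ', ∀ β ∈ Φ', sref α β ∈ Φ')
    (hD1 : (↑D : Set V) ⊆ Φ' ∩ posCone Pi) (hD2 : Φ' ∩ posCone Pi ⊆ posCone D)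
    (hindep : ∀ a : V → ℝ, (∑ γ ∈ D, a γ • γ) = 0 → ∀ γ ∈ D, a γ = 0)
    {β : V} (hβ : β ∈ Φ' ∩ posCone Pi) (hβD : β ∉ D) :
    ∃ γ ∈ D, sref γ β ∈ Φ' ∩ posCone Pi ∧ f (sref γ β) < f β ∧ sref γ (sref γ β) = β := by
  obtain ⟨c, hc, hβexp⟩ := hD2 hβ
  have hβΦ : β ∈ Φ := hΦ'sub hβ.1
  have hβ0 : β ≠ 0 := fun h => h0 (h ▸ hβΦ)
  have hββ : (0:ℝ) < ⟪β, β⟫ :=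
    lt_of_le_of_ne real_inner_self_nonneg (Ne.symm (inner_self_ne_zero.mpr hβ0))
  have hex : ∃ γ ∈ D, 0 < c γ * ⟪β, γ⟫ := by
    by_contra hno
    push_neg at hno
    have : ⟪β, β⟫ ≤ 0 := by
      nth_rewrite 2 [hβexp]
      rw [inner_sum]
      refine Finset.sum_nonpos fun γ hγ => ?_
      rw [real_inner_smul_right]
      have := hno γ hγ
      linarith [mul_comm (c γ) ⟪β, γ⟫]
    linarith
  obtain ⟨γ, hγD, hprod⟩ := hex
  have hβγ : 0 < ⟪β, γ⟫ := by
    rcases (hc γ).lt_or_eq with h | h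
    · nlinarith
    · rw [← h] at hprod; nlinarith
  have hne : β ≠ γ := fun h => hβD (h ▸ hγD)
  have hmem := sref_simple_pos h0 hred hsplit hf1 hΦ'sub hΦ'cl hD1 hD2 hindep hγD hβ hne
  refine ⟨γ, hγD, hmem, ?_, ?_⟩
  · have hγ' := hD1 (Finset.mem_coe.mpr hγD)
    have hγΦ : γ ∈ Φ := hΦ'sub hγ'.1
    have hγ0 : γ ≠ 0 := fun h => h0 (h ▸ hγΦ)
    have hγγ : (0:ℝ) < ⟪γ, γ⟫ :=
      lt_of_le_of_ne real_inner_self_nonneg (Ne.symm (inner_self_ne_zero.mpr hγ0))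
    have hfγ : 0 < f γ := f_pos h0 hf1 hγΦ hγ'.2
    rw [sref_apply', map_sub, map_smul, smul_eq_mul]
    have : 0 < 2 * ⟪β, γ⟫ / ⟪γ, γ⟫ := by positivity
    nlinarith
  · have := congrArg (fun (g : V ≃ₗᵢ[ℝ] V) => g β) (sref_sq γ)
    simpa using this

lemma orbit_of_pos (hfin : Φ.Finite) (h0 : (0:V) ∉ Φ)
    (hred : ∀ α ∈ Φ, ∀ c : ℝ, c • α ∈ Φ → c = 1 ∨ c = -1)
    (hsplit : ∀ β ∈ Φ, β ∈ posCone Pi ∨ -β ∈ posCone Pi)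
    (hf1 : ∀ x ∈ Pi, f x = 1)
    (hΦ'sub : Φ' ⊆ Φ) (hΦ'cl : ∀ α ∈ Φ', ∀ β ∈ Φ', sref α β ∈ Φ')
    (hD1 : (↑D : Set V) ⊆ Φ' ∩ posCone Pi) (hD2 : Φ' ∩ posCone Pi ⊆ posCone D)
    (hindep : ∀ a : V → ℝ, (∑ γ ∈ D, a γ • γ) = 0 → ∀ γ ∈ D, a γ = 0) :
    ∀ β ∈ Φ' ∩ posCone Pi, ∃ (l : List V) (γ : V),
      (∀ x ∈ l, x ∈ D) ∧ γ ∈ D ∧ β = wprod l γ := by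
  classical
  have hP'fin : (Φ' ∩ posCone Pi).Finite := (hfin.subset hΦ'sub).subset Set.inter_subset_left
  set P := hP'fin.toFinset with hPdef
  have hPmem : ∀ x, x ∈ P ↔ x ∈ Φ' ∩ posCone Pi := fun x => by simp [hPdef]
  suffices H : ∀ k : ℕ, ∀ β, β ∈ Φ' ∩ posCone Pi →
      (P.filter (fun x => f x < f β)).card ≤ k →
      ∃ (l : List V) (γ : V), (∀ x ∈ l, x ∈ D) ∧ γ ∈ D ∧ β = wprod l γ by
    intro β hβ; exact H _ β hβ le_rfl
  intro k
  induction k with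
  | zero =>
    intro β hβ hcard
    by_cases hβD : β ∈ D
    · exact ⟨[], β, by simp, hβD, by simp [wprod]⟩
    · exfalso
      obtain ⟨γ, hγD, hmem, hflt, _⟩ :=
        orbit_step h0 hred hsplit hf1 hΦ'sub hΦ'cl hD1 hD2 hindep hβ hβD
      have : sref γ β ∈ P.filter (fun x => f x < f β) :=
        Finset.mem_filter.mpr ⟨(hPmem _).mpr hmem, hflt⟩
      have := Finset.card_pos.mpr ⟨_, this⟩
      omega
  | succ k ih =>
    intro β hβ hcard
    by_cases hβD : β ∈ D
    · exact ⟨[], β, by simp, hβD, by simp [wprod]⟩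
    · obtain ⟨γ, hγD, hmem, hflt, hinv⟩ :=
        orbit_step h0 hred hsplit hf1 hΦ'sub hΦ'cl hD1 hD2 hindep hβ hβD
      have hsub : P.filter (fun x => f x < f (sref γ β)) ⊆ P.filter (fun x => f x < f β) := by
        intro x hx
        rw [Finset.mem_filter] at hx ⊢
        exact ⟨hx.1, lt_trans hx.2 hflt⟩
      have hss : P.filter (fun x => f x < f (sref γ β)) ⊂ P.filter (fun x => f x < f β) := by
        refine (Finset.ssubset_iff_of_subset hsub).mpr ?_
        exact ⟨sref γ β, Finset.mem_filter.mpr ⟨(hPmem _).mpr hmem, hflt⟩,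
          by simp [Finset.mem_filter]⟩
      have hcard' : (P.filter (fun x => f x < f (sref γ β))).card ≤ k := by
        have := Finset.card_lt_card hss
        omega
      obtain ⟨l, γ', hl, hγ', heq⟩ := ih (sref γ β) hmem hcard'
      exact ⟨γ :: l, γ', by
        intro x hx
        rcases List.mem_cons.mp hx with rfl | hx
        · exact hγD
        · exact hl x hx, hγ', by rw [wprod_cons]; simp [← heq, hinv]⟩

lemma sref_root_mem (hfin : Φ.Finite) (h0 : (0:V) ∉ Φ)
    (hred : ∀ α ∈ Φ, ∀ c : ℝ, c • α ∈ Φ → c = 1 ∨ c = -1)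
    (hsplit : ∀ β ∈ Φ, β ∈ posCone Pi ∨ -β ∈ posCone Pi)
    (hf1 : ∀ x ∈ Pi, f x = 1)
    (hΦ'sub : Φ' ⊆ Φ) (hΦ'cl : ∀ α ∈ Φ', ∀ β ∈ Φ', sref α β ∈ Φ')
    (hD1 : (↑D : Set V) ⊆ Φ' ∩ posCone Pi) (hD2 : Φ' ∩ posCone Pi ⊆ posCone D)
    (hindep : ∀ a : V → ℝ, (∑ γ ∈ D, a γ • γ) = 0 → ∀ γ ∈ D, a γ = 0)
    {β : V} (hβ : β ∈ Φ') :
    sref β ∈ Subgroup.closure {g : V ≃ₗᵢ[ℝ] V | ∃ γ ∈ (↑D : Set V), g = sref γ} := by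
  have key : ∀ δ ∈ Φ' ∩ posCone Pi,
      sref δ ∈ Subgroup.closure {g : V ≃ₗᵢ[ℝ] V | ∃ γ ∈ (↑D : Set V), g = sref γ} := by
    intro δ hδ
    obtain ⟨l, γ, hl, hγ, heq⟩ :=
      orbit_of_pos hfin h0 hred hsplit hf1 hΦ'sub hΦ'cl hD1 hD2 hindep δ hδ
    rw [heq, sref_conj]
    exact Subgroup.mul_mem _
      (Subgroup.mul_mem _ (wprod_mem_closure l (fun x hx => Finset.mem_coe.mpr (hl x hx)))
        (Subgroup.subset_closure ⟨γ, Finset.mem_coe.mpr hγ, rfl⟩))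
      (Subgroup.inv_mem _ (wprod_mem_closure l (fun x hx => Finset.mem_coe.mpr (hl x hx))))
  by_cases hpos : β ∈ posCone Pi
  · exact key β ⟨hβ, hpos⟩
  · have hneg := (f_neg h0 hsplit hf1 (hΦ'sub hβ) hpos).1
    have h1 : -β ∈ Φ' := neg_mem_Φ' hΦ'cl hβ
    have := key (-β) ⟨h1, hneg⟩
    rwa [sref_neg_eq] at this

lemma word_rep {w : V ≃ₗᵢ[ℝ] V}
    (hw : w ∈ Subgroup.closure {g : V ≃ₗᵢ[ℝ] V | ∃ γ ∈ (↑D : Set V), g = sref γ}) :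
    ∃ l : List V, (∀ γ ∈ l, γ ∈ D) ∧ w = wprod l := by
  induction hw using Subgroup.closure_induction with
  | mem g hg =>
    obtain ⟨γ, hγ, rfl⟩ := hg
    exact ⟨[γ], by simpa using Finset.mem_coe.mp hγ, by simp [wprod]⟩
  | one => exact ⟨[], by simp, by simp⟩
  | mul a b _ _ iha ihb =>
    obtain ⟨la, hla, rfl⟩ := iha
    obtain ⟨lb, hlb, rfl⟩ := ihb
    exact ⟨la ++ lb, by
      intro γ hγ
      rcases List.mem_append.mp hγ with h | h
      · exact hla γ h
      · exact hlb γ h, (wprod_append la lb).symm⟩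
  | inv a _ iha =>
    obtain ⟨la, hla, rfl⟩ := iha
    exact ⟨la.reverse, fun γ hγ => hla γ (List.mem_reverse.mp hγ), (wprod_reverse la).symm⟩
end main4
section main5
attribute [local instance] Classical.propDecidable
variable {Φ : Set V} {Pi : Finset V} {f : V →ₗ[ℝ] ℝ} {Φ' : Set V} {D : Finset V}

lemma deletion (h0 : (0:V) ∉ Φ)
    (hred : ∀ α ∈ Φ, ∀ c : ℝ, c • α ∈ Φ → c = 1 ∨ c = -1)
    (hsplit : ∀ β ∈ Φ, β ∈ posCone Pi ∨ -β ∈ posCone Pi)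
    (hf1 : ∀ x ∈ Pi, f x = 1)
    (hΦ'sub : Φ' ⊆ Φ) (hΦ'cl : ∀ α ∈ Φ', ∀ β ∈ Φ', sref α β ∈ Φ')
    (hD1 : (↑D : Set V) ⊆ Φ' ∩ posCone Pi) (hD2 : Φ' ∩ posCone Pi ⊆ posCone D)
    (hindep : ∀ a : V → ℝ, (∑ γ ∈ D, a γ • γ) = 0 → ∀ γ ∈ D, a γ = 0) :
    ∀ l : List V, (∀ γ ∈ l, γ ∈ D) → ∀ α ∈ D, f (wprod l α) < 0 →
      ∃ l' : List V, (∀ γ ∈ l', γ ∈ D) ∧ l'.length + 1 = l.length ∧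
        wprod l' = wprod l * sref α := by
  intro l
  induction l with
  | nil =>
    intro _ α hα hneg
    exfalso
    have hα' := hD1 (Finset.mem_coe.mpr hα)
    have : 0 < f α := f_pos h0 hf1 (hΦ'sub hα'.1) hα'.2
    simp only [wprod_nil, LinearIsometryEquiv.coe_one, id_eq] at hneg
    linarith
  | cons γ r ih =>
    intro hl α hα hneg
    have hγD : γ ∈ D := hl γ (List.mem_cons_self)
    have hrD : ∀ x ∈ r, x ∈ D := fun x hx => hl x (List.mem_cons_of_mem _ hx)
    have hαΦ' : α ∈ Φ' := (hD1 (Finset.mem_coe.mpr hα)).1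
    have hrαΦ' : wprod r α ∈ Φ' := wprod_maps hΦ'cl hD1 r hrD α hαΦ'
    by_cases hcase : f (wprod r α) < 0
    · obtain ⟨r', h1, h2, h3⟩ := ih hrD α hα hcase
      refine ⟨γ :: r', ?_, by simp [h2], ?_⟩
      · intro x hx
        rcases List.mem_cons.mp hx with rfl | hx
        · exact hγD
        · exact h1 x hx
      · rw [wprod_cons, h3, wprod_cons, mul_assoc]
    · have hfge : 0 < f (wprod r α) := by
        rcases f_root_sign h0 hsplit hf1 (hΦ'sub hrαΦ') with h | h
        · exact h
        · exact absurd h hcase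
      have hpos : wprod r α ∈ Φ' ∩ posCone Pi :=
        ⟨hrαΦ', pos_of_f_pos h0 hsplit hf1 (hΦ'sub hrαΦ') hfge⟩
      have heq : wprod r α = γ := by
        by_contra hne
        have hmem := sref_simple_pos h0 hred hsplit hf1 hΦ'sub hΦ'cl hD1 hD2 hindep
          hγD hpos hne
        have : 0 < f (sref γ (wprod r α)) :=
          f_pos h0 hf1 (hΦ'sub hmem.1) hmem.2
        rw [wprod_cons] at hneg
        simp only [LinearIsometryEquiv.coe_mul, Function.comp_apply] at hneg
        linarith
      have hconj : sref γ = wprod r * sref α * (wprod r)⁻¹ := by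
        rw [← heq]; exact sref_conj (wprod r) α
      refine ⟨r, hrD, by simp, ?_⟩
      rw [wprod_cons, hconj]
      rw [inv_mul_cancel_right, mul_assoc, sref_sq, mul_one]

lemma steinberg (h0 : (0:V) ∉ Φ)
    (hred : ∀ α ∈ Φ, ∀ c : ℝ, c • α ∈ Φ → c = 1 ∨ c = -1)
    (hsplit : ∀ β ∈ Φ, β ∈ posCone Pi ∨ -β ∈ posCone Pi)
    (hf1 : ∀ x ∈ Pi, f x = 1)
    (hΦ'sub : Φ' ⊆ Φ) (hΦ'cl : ∀ α ∈ Φ', ∀ β ∈ Φ', sref α β ∈ Φ')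
    (hD1 : (↑D : Set V) ⊆ Φ' ∩ posCone Pi) (hD2 : Φ' ∩ posCone Pi ⊆ posCone D)
    (hindep : ∀ a : V → ℝ, (∑ γ ∈ D, a γ • γ) = 0 → ∀ γ ∈ D, a γ = 0)
    {z : V} (hz : ∀ γ ∈ Φ' ∩ posCone Pi, 0 ≤ ⟪z, γ⟫) :
    ∀ l : List V, (∀ γ ∈ l, γ ∈ D) → wprod l z = z →
      wprod l ∈ Subgroup.closure {g : V ≃ₗᵢ[ℝ] V | ∃ β ∈ Φ', ⟪z, β⟫ = 0 ∧ g = sref β} := by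
  suffices H : ∀ k : ℕ, ∀ l : List V, l.length ≤ k → (∀ γ ∈ l, γ ∈ D) → wprod l z = z →
      wprod l ∈ Subgroup.closure {g : V ≃ₗᵢ[ℝ] V | ∃ β ∈ Φ', ⟪z, β⟫ = 0 ∧ g = sref β} by
    intro l hl hfix; exact H l.length l le_rfl hl hfix
  intro k
  induction k with
  | zero =>
    intro l hlen _ _
    have : l = [] := List.eq_nil_of_length_eq_zero (Nat.le_zero.mp hlen)
    rw [this, wprod_nil]
    exact Subgroup.one_mem _
  | succ k ih =>
    intro l hlen hl hfix
    rcases List.eq_nil_or_concat l with rfl | ⟨r, α, rfl⟩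
    · rw [wprod_nil]; exact Subgroup.one_mem _
    · rw [List.concat_eq_append] at *
      have hαD : α ∈ D := hl α (by simp)
      have hrD : ∀ x ∈ r, x ∈ D := fun x hx => hl x (by simp [hx])
      have hαΦ' : α ∈ Φ' := (hD1 (Finset.mem_coe.mpr hαD)).1
      have hsplitw : wprod (r ++ [α]) = wprod r * sref α := by
        rw [wprod_append]; simp [wprod]
      have hrαΦ' : wprod r α ∈ Φ' := wprod_maps hΦ'cl hD1 r hrD α hαΦ'
      by_cases hcase : f (wprod r α) < 0
      · -- deletion
        obtain ⟨l', h1, h2, h3⟩ := deletion h0 hred hsplit hf1 hΦ'sub hΦ'cl hD1 hD2 hindep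
          r hrD α hαD hcase
        have hlen' : l'.length ≤ k := by
          have : (r ++ [α]).length = r.length + 1 := by simp
          omega
        have heq : wprod l' = wprod (r ++ [α]) := h3.trans hsplitw.symm
        rw [← heq]
        exact ih l' hlen' h1 (by rw [heq]; exact hfix)
      · -- wall case
        have hfge : 0 < f (wprod r α) := by
          rcases f_root_sign h0 hsplit hf1 (hΦ'sub hrαΦ') with h | h
          · exact h
          · exact absurd h hcase
        have hpos : wprod r α ∈ Φ' ∩ posCone Pi :=
          ⟨hrαΦ', pos_of_f_pos h0 hsplit hf1 (hΦ'sub hrαΦ') hfge⟩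
        have hzα0 : ⟪z, α⟫ = 0 := by
          have h1 : 0 ≤ ⟪z, α⟫ := hz α (hD1 (Finset.mem_coe.mpr hαD))
          have h2 : 0 ≤ ⟪z, wprod r α⟫ := hz _ hpos
          have h3 : ⟪z, α⟫ = - ⟪z, wprod r α⟫ := by
            have e1 : ⟪z, α⟫ = ⟪wprod (r ++ [α]) z, wprod (r ++ [α]) α⟫ := by
              rw [LinearIsometryEquiv.inner_map_map]
            have e2 : wprod (r ++ [α]) α = - (wprod r α) := by
              rw [hsplitw]
              simp only [LinearIsometryEquiv.coe_mul, Function.comp_apply]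
              rw [sref_self', map_neg]
            rw [e1, e2, hfix, inner_neg_right]
          linarith
        have hfixα : sref α z = z := sref_fix hzα0
        have hrfix : wprod r z = z := by
          have : wprod (r ++ [α]) (sref α z) = z := by rw [hfixα]; exact hfix
          rw [hsplitw] at this
          simpa [show (sref α) ((sref α) z) = z from Submodule.reflection_reflection (ℝ ∙ α)ᗮ z] using this
        have hrmem := ih r (by simp at hlen; omega) hrD hrfix
        rw [hsplitw]
        exact Subgroup.mul_mem _ hrmem
          (Subgroup.subset_closure ⟨α, hαΦ', hzα0, rfl⟩)
end main5

/-- The pointwise stabilizer as a subgroup. -/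
noncomputable def stabGroup (Φ : Set V) {n : ℕ} (x : Fin n → V) (m : ℕ) :
    Subgroup (V ≃ₗᵢ[ℝ] V) where
  carrier := stabSet Φ x m
  one_mem' := ⟨Subgroup.one_mem _, fun _ _ => rfl⟩
  mul_mem' := by
    rintro a b ⟨ha1, ha2⟩ ⟨hb1, hb2⟩
    refine ⟨Subgroup.mul_mem _ ha1 hb1, fun i hi => ?_⟩
    simp only [LinearIsometryEquiv.coe_mul, Function.comp_apply, hb2 i hi, ha2 i hi]
  inv_mem' := by
    rintro a ⟨ha1, ha2⟩
    refine ⟨Subgroup.inv_mem _ ha1, fun i hi => ?_⟩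
    conv_lhs => rw [← ha2 i hi]
    simp

/-- For `u, v ∈ C⁽ⁿ⁾` and `0 < t < 1`, the pointwise stabilizer of the first `m`
coordinates of `t u + (1 - t) v` is the intersection of those of `u` and of `v`. -/
theorem stab_of_convex_combination (Φ : Set V) (Pi : Finset V)
    (hfin : Φ.Finite) (h0 : (0 : V) ∉ Φ)
    (hrefl : ∀ α ∈ Φ, ∀ β ∈ Φ, sref α β ∈ Φ)
    (hred : ∀ α ∈ Φ, ∀ c : ℝ, c • α ∈ Φ → c = 1 ∨ c = -1)
    (hPiΦ : (Pi : Set V) ⊆ Φ)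
    (hind : LinearIndependent ℝ (fun x : {x : V // x ∈ Pi} => (x : V)))
    (hsplit : ∀ β ∈ Φ, β ∈ posCone Pi ∨ -β ∈ posCone Pi)
    (n : ℕ) (u v : Fin n → V) (hu : u ∈ Cfund Φ Pi n) (hv : v ∈ Cfund Φ Pi n)
    (t : ℝ) (ht0 : 0 < t) (ht1 : t < 1) (m : ℕ) (hm : m ≤ n) :
    stabSet Φ (fun i => t • u i + (1 - t) • v i) m = stabSet Φ u m ∩ stabSet Φ v m := by
  classical
  obtain ⟨f, hf1⟩ := exists_pos_functional Pi hind
  set z : Fin n → V := fun i => t • u i + (1 - t) • v i with hzdef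
  set Z : ℕ → Set V := fun m' =>
    {α | α ∈ Φ ∧ ∀ i : Fin n, (i : ℕ) < m' → ⟪u i, α⟫ = 0 ∧ ⟪v i, α⟫ = 0} with hZdef
  set W : ℕ → Subgroup (V ≃ₗᵢ[ℝ] V) := fun m' =>
    Subgroup.closure {g | ∃ α ∈ Z m', g = sref α} with hWdef
  have hZsub : ∀ m', Z m' ⊆ Φ := fun m' α hα => hα.1
  have hZcl : ∀ m', ∀ α ∈ Z m', ∀ β ∈ Z m', sref α β ∈ Z m' := by
    intro m' α hα β hβ
    refine ⟨hrefl α hα.1 β hβ.1, fun i hi => ?_⟩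
    rw [sref_apply']
    constructor
    · rw [inner_sub_right, real_inner_smul_right, (hβ.2 i hi).1, (hα.2 i hi).1]; ring
    · rw [inner_sub_right, real_inner_smul_right, (hβ.2 i hi).2, (hα.2 i hi).2]; ring
  have hsrefstab : ∀ m', ∀ β ∈ Z m', sref β ∈ stabSet Φ u m' ∧ sref β ∈ stabSet Φ v m' := by
    intro m' β hβ
    have hW : sref β ∈ Wgroup Φ := Subgroup.subset_closure ⟨β, hβ.1, rfl⟩
    exact ⟨⟨hW, fun i hi => sref_fix (hβ.2 i hi).1⟩, ⟨hW, fun i hi => sref_fix (hβ.2 i hi).2⟩⟩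
  have hWstab : ∀ m', (W m' : Set (V ≃ₗᵢ[ℝ] V)) ⊆ stabSet Φ u m' ∩ stabSet Φ v m' := by
    intro m'
    have h1 : W m' ≤ stabGroup Φ u m' ⊓ stabGroup Φ v m' := by
      rw [hWdef]
      refine Subgroup.closure_le _ |>.mpr ?_
      rintro g ⟨β, hβ, rfl⟩
      exact ⟨(hsrefstab m' β hβ).1, (hsrefstab m' β hβ).2⟩
    intro w hw
    exact h1 hw
  have hstabz : ∀ m', stabSet Φ u m' ∩ stabSet Φ v m' ⊆ stabSet Φ z m' := by
    rintro m' w ⟨⟨hw1, hw2⟩, ⟨_, hw3⟩⟩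
    refine ⟨hw1, fun i hi => ?_⟩
    have : w (z i) = t • w (u i) + (1 - t) • w (v i) := by
      simp [hzdef, map_add, map_smul]
    rw [this, hw2 i hi, hw3 i hi]
  have key : ∀ m', m' ≤ n → stabSet Φ z m' ⊆ (W m' : Set (V ≃ₗᵢ[ℝ] V)) := by
    intro m'
    induction m' with
    | zero =>
      intro _ w hw
      have h1 : Wgroup Φ ≤ W 0 := by
        rw [hWdef]
        apply Subgroup.closure_mono
        rintro g ⟨α, hα, rfl⟩
        exact ⟨α, ⟨hα, fun i hi => absurd hi (Nat.not_lt_zero _)⟩, rfl⟩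
      exact h1 hw.1
    | succ p ih =>
      intro hp w hw
      have hwm : w ∈ stabSet Φ z p :=
        ⟨hw.1, fun i hi => hw.2 i (Nat.lt_succ_of_lt hi)⟩
      have hwW : w ∈ W p := ih (Nat.le_of_succ_le hp) hwm
      obtain ⟨D, hD1, hD2, hDmin⟩ := exists_simple (Φ' := Z p) hfin (hZsub p)
      have hobtuse := simple_obtuse h0 hsplit hf1 (hZsub p) (hZcl p) hD1 hD2 hDmin
      have hindep := simple_indep h0 hf1 (hZsub p) hD1 hobtuse
      have hle : W p ≤ Subgroup.closure {g : V ≃ₗᵢ[ℝ] V | ∃ γ ∈ (↑D : Set V), g = sref γ} := by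
        rw [hWdef]
        refine Subgroup.closure_le _ |>.mpr ?_
        rintro g ⟨β, hβ, rfl⟩
        exact sref_root_mem hfin h0 hred hsplit hf1 (hZsub p) (hZcl p) hD1 hD2 hindep hβ
      obtain ⟨l, hl, heq⟩ := word_rep (hle hwW)
      have hmn : p < n := hp
      set i0 : Fin n := ⟨p, hmn⟩ with hi0def
      have hcham_u : ∀ γ ∈ Z p ∩ posCone Pi, 0 ≤ ⟪u i0, γ⟫ := by
        intro γ hγ
        exact hu i0 γ hγ.1.1 (hsrefstab p γ hγ.1).1 hγ.2
      have hcham_v : ∀ γ ∈ Z p ∩ posCone Pi, 0 ≤ ⟪v i0, γ⟫ := by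
        intro γ hγ
        exact hv i0 γ hγ.1.1 (hsrefstab p γ hγ.1).2 hγ.2
      have hzin : ∀ γ : V, ⟪z i0, γ⟫ = t * ⟪u i0, γ⟫ + (1 - t) * ⟪v i0, γ⟫ := by
        intro γ
        simp [hzdef, inner_add_left, real_inner_smul_left]
      have hz0 : ∀ γ ∈ Z p ∩ posCone Pi, 0 ≤ ⟪z i0, γ⟫ := by
        intro γ hγ
        rw [hzin γ]
        have := hcham_u γ hγ
        have := hcham_v γ hγ
        nlinarith
      have hfix : wprod l (z i0) = z i0 := by
        rw [← heq]
        exact hw.2 i0 (Nat.lt_succ_self p)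
      have hst := steinberg h0 hred hsplit hf1 (hZsub p) (hZcl p) hD1 hD2 hindep hz0 l hl hfix
      have hfinal : Subgroup.closure
          {g : V ≃ₗᵢ[ℝ] V | ∃ β ∈ Z p, ⟪z i0, β⟫ = 0 ∧ g = sref β} ≤ W (p+1) := by
        refine Subgroup.closure_le _ |>.mpr ?_
        rintro g ⟨β, hβ, hzβ, rfl⟩
        have hkey : ∀ δ, δ ∈ Z p → δ ∈ posCone Pi → ⟪z i0, δ⟫ = 0 →
            ⟪u i0, δ⟫ = 0 ∧ ⟪v i0, δ⟫ = 0 := by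
          intro δ hδ hδp hδz
          rw [hzin δ] at hδz
          have h1 := hcham_u δ ⟨hδ, hδp⟩
          have h2 := hcham_v δ ⟨hδ, hδp⟩
          constructor <;> nlinarith
        have hmem : β ∈ Z (p+1) := by
          refine ⟨hβ.1, fun i hi => ?_⟩
          rcases Nat.lt_succ_iff_lt_or_eq.mp hi with h | h
          · exact hβ.2 i h
          · have hieq : i = i0 := Fin.ext h
            subst hieq
            by_cases hpos : β ∈ posCone Pi
            · exact hkey β hβ hpos hzβ
            · have hneg : -β ∈ posCone Pi := by
                rcases hsplit β hβ.1 with hc | hc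
                · exact absurd hc hpos
                · exact hc
              have hnegZ : -β ∈ Z p := by
                have := hZcl p β hβ β hβ
                rwa [sref_self'] at this
              have hzneg : ⟪z i0, -β⟫ = 0 := by rw [inner_neg_right, hzβ, neg_zero]
              have := hkey (-β) hnegZ hneg hzneg
              rw [inner_neg_right, inner_neg_right, neg_eq_zero, neg_eq_zero] at this
              exact this
        exact Subgroup.subset_closure ⟨β, hmem, rfl⟩
      have : wprod l ∈ W (p+1) := hfinal hst
      rwa [← heq] at this
  ext w
  constructor
  · intro hw
    exact hWstab m (key m hm hw)
  · intro hw
    exact hstabz m hw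
end

section
/- Let Φ be a finite crystallographic root system with simple system Π and Weyl group W, and suppose (v,w) ∈ C⁽²⁾ (the fundamental region in V²) with both v and w roots of Φ. If ⟨v,w⟩ ≠ 0 and v,w are linearly independent, then v is a dominant root (lies in the fundamental chamber) and, in the case C''((v,w)) equals the A₂ Cartan matrix (i.e. ⟨v∨,w⟩ = ⟨w∨,v⟩ = −1), w is the negative of a simple root. -/
open scoped RealInnerProductSpace

variable {V : Type*} [NormedAddCommGroup V] [InnerProductSpace ℝ V] [FiniteDimensional ℝ V]

section helpers
set_option linter.unusedSectionVars false

lemma inner_self_pos' {x : V} (hx : x ≠ 0) : 0 < ⟪x, x⟫ := by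
  rw [real_inner_self_eq_norm_sq]
  exact pow_pos (norm_pos_iff.mpr hx) 2

lemma sum_indicator_smul [DecidableEq V] (Pi : Finset V) {x : V} (hx : x ∈ Pi) (r : ℝ) :
    ∑ z ∈ Pi, (if z = x then r else 0) • z = r • x := by
  rw [Finset.sum_eq_single x]
  · simp
  · intro z _ hz; simp [hz]
  · intro h; exact absurd hx h

lemma mem_posCone_self [DecidableEq V] {Pi : Finset V} {x : V} (hx : x ∈ Pi) :
    x ∈ posCone Pi := by
  refine ⟨fun z => if z = x then 1 else 0, fun z => by dsimp only; split <;> norm_num, ?_⟩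
  rw [sum_indicator_smul Pi hx 1, one_smul]

lemma coeff_unique {Pi : Finset V}
    (hind : LinearIndependent ℝ (fun x : {x : V // x ∈ Pi} => (x : V)))
    {c d : V → ℝ} (h : ∑ x ∈ Pi, c x • x = ∑ x ∈ Pi, d x • x) :
    ∀ x ∈ Pi, c x = d x := by
  have h' : ∑ i : {x // x ∈ Pi}, (c i - d i) • (i : V) = 0 := by
    rw [Finset.sum_coe_sort Pi (fun x => (c x - d x) • x)]
    simp [sub_smul, Finset.sum_sub_distrib, h]
  have h2 := Fintype.linearIndependent_iff.mp hind (fun i => c i - d i) h'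
  intro x hx
  have := h2 ⟨x, hx⟩
  simpa [sub_eq_zero] using this

lemma sref_mem_W {Φ : Set V} {α : V} (hα : α ∈ Φ) : sref α ∈ Wgroup Φ :=
  Subgroup.subset_closure ⟨α, hα, rfl⟩

/-- If `0 < a/b` rewritten form: from `2*A = k*B`, `0 < A`, `0 < B`, `k : ℤ`, get `1 ≤ (k:ℝ)`. -/
lemma int_coeff_ge_one {A B : ℝ} {k : ℤ} (h : 2 * A = (k : ℝ) * B) (hA : 0 < A) (hB : 0 < B) :
    1 ≤ (k : ℝ) := by
  have h1 : (0 : ℝ) < k := by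
    by_contra hk
    push_neg at hk
    have := mul_le_mul_of_nonneg_right hk hB.le
    rw [zero_mul] at this
    linarith
  have h2 : (0 : ℤ) < k := by exact_mod_cast h1
  exact_mod_cast h2

end helpers

/-- Let `Φ` be crystallographic and `(v, w) ∈ C⁽²⁾` with `v, w` roots. If
`⟪v,w⟫ ≠ 0` and `v, w` are linearly independent, then `v` is a dominant root, and if
the Cartan matrix of `(v, w)` is the `A₂` Cartan matrix then `w` is the negative of a
simple root. -/
theorem pair_in_fund_region_A2 (Φ : Set V) (Pi : Finset V)
    (hfin : Φ.Finite) (h0 : (0 : V) ∉ Φ)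
    (hrefl : ∀ α ∈ Φ, ∀ β ∈ Φ, sref α β ∈ Φ)
    (hred : ∀ α ∈ Φ, ∀ c : ℝ, c • α ∈ Φ → c = 1 ∨ c = -1)
    (hPiΦ : (Pi : Set V) ⊆ Φ)
    (hind : LinearIndependent ℝ (fun x : {x : V // x ∈ Pi} => (x : V)))
    (hsplit : ∀ β ∈ Φ, β ∈ posCone Pi ∨ -β ∈ posCone Pi)
    -- crystallographic
    (hcrys : ∀ α ∈ Φ, ∀ β ∈ Φ, ∃ k : ℤ, 2 * ⟪α, β⟫ / ⟪β, β⟫ = (k : ℝ))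
    (v w : V) (hvΦ : v ∈ Φ) (hwΦ : w ∈ Φ)
    (hmem : ![v, w] ∈ Cfund Φ Pi 2)
    (hne : ⟪v, w⟫ ≠ 0) (hindep : ∀ c : ℝ, w ≠ c • v) :
    (∀ α ∈ Pi, 0 ≤ ⟪v, α⟫) ∧
      ((2 * ⟪v, w⟫ / ⟪v, v⟫ = -1 ∧ 2 * ⟪w, v⟫ / ⟪w, w⟫ = -1) → -w ∈ Pi) := by
  classical
  -- Part 1: v is dominant
  have hdom : ∀ α ∈ Φ, α ∈ posCone Pi → 0 ≤ ⟪v, α⟫ := by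
    intro α hα hpos
    have h0m := hmem 0
    have := h0m α hα ⟨sref_mem_W hα, fun i hi => absurd hi (Nat.not_lt_zero _)⟩ hpos
    simpa using this
  have hdomPi : ∀ α ∈ Pi, 0 ≤ ⟪v, α⟫ := fun α hα =>
    hdom α (hPiΦ hα) (mem_posCone_self hα)
  refine ⟨hdomPi, ?_⟩
  rintro ⟨hA1, hA2⟩
  have hdomCone : ∀ u ∈ posCone Pi, 0 ≤ ⟪v, u⟫ := by
    rintro u ⟨c, hc0, rfl⟩
    rw [inner_sum]
    refine Finset.sum_nonneg fun x hx => ?_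
    rw [real_inner_smul_right]
    exact mul_nonneg (hc0 x) (hdomPi x hx)
  -- the condition coming from m = 1
  have hcond1 : ∀ α ∈ Φ, α ∈ posCone Pi → ⟪v, α⟫ = 0 → 0 ≤ ⟪w, α⟫ := by
    intro α hα hpos hperp
    have h1m := hmem 1
    have hfix : ∀ i : Fin 2, (i : ℕ) < 1 → sref α (![v, w] i) = ![v, w] i := by
      intro i hi
      have h0' : i = 0 := Fin.ext (by omega)
      subst h0'
      simpa using sref_fix hperp
    have := h1m α hα ⟨sref_mem_W hα, hfix⟩ hpos
    simpa using this
  -- basic scalar facts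
  have hv0 : v ≠ 0 := fun h => h0 (h ▸ hvΦ)
  have hw0 : w ≠ 0 := fun h => h0 (h ▸ hwΦ)
  have hnv : 0 < ⟪v, v⟫ := inner_self_pos' hv0
  have hnw : 0 < ⟪w, w⟫ := inner_self_pos' hw0
  have hA1' : 2 * ⟪v, w⟫ = -1 * ⟪v, v⟫ := (div_eq_iff hnv.ne').mp hA1
  have hA2' : 2 * ⟪w, v⟫ = -1 * ⟪w, w⟫ := (div_eq_iff hnw.ne').mp hA2
  have hcomm : ⟪w, v⟫ = ⟪v, w⟫ := real_inner_comm v w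
  have hNN : ⟪w, w⟫ = ⟪v, v⟫ := by linarith
  -- -w is a root
  have hβΦ : -w ∈ Φ := by
    have h := hrefl w hwΦ w hwΦ
    rw [sref_apply'] at h
    have h2 : 2 * ⟪w, w⟫ / ⟪w, w⟫ = 2 := by field_simp
    rw [h2] at h
    have h3 : w - (2 : ℝ) • w = -w := by module
    rwa [h3] at h
  -- -w is a positive root
  have hβpos : -w ∈ posCone Pi := by
    rcases hsplit w hwΦ with h | h
    · exfalso
      have := hdomCone w h
      linarith
    · exact h
  by_contra hβPi
  obtain ⟨c, hc0, hcβ⟩ := hβpos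
  have hsum : ⟪-w, -w⟫ = ∑ x ∈ Pi, c x * ⟪-w, x⟫ := by
    calc ⟪-w, -w⟫ = ⟪-w, ∑ x ∈ Pi, c x • x⟫ := by rw [← hcβ]
      _ = ∑ x ∈ Pi, c x * ⟪-w, x⟫ := by
          rw [inner_sum]
          exact Finset.sum_congr rfl fun x _ => real_inner_smul_right _ _ _
  have hww' : ⟪-w, -w⟫ = ⟪v, v⟫ := by rw [inner_neg_neg]; exact hNN
  have hex : ∃ x ∈ Pi, 0 < c x * ⟪-w, x⟫ := by
    by_contra hno
    push_neg at hno
    have hle : ∑ x ∈ Pi, c x * ⟪-w, x⟫ ≤ 0 := Finset.sum_nonpos hno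
    rw [← hsum, hww'] at hle
    linarith
  obtain ⟨x, hxPi, hxprod⟩ := hex
  have hβx : 0 < ⟪-w, x⟫ := by
    rcases lt_or_ge 0 ⟪-w, x⟫ with h | h
    · exact h
    · exfalso
      have h1 := mul_le_mul_of_nonneg_left h (hc0 x)
      rw [mul_zero] at h1
      linarith
  have hcx : 0 < c x := by
    rcases (hc0 x).lt_or_eq with h | h
    · exact h
    · exfalso; rw [← h] at hxprod; simpa using hxprod
  have hxΦ : x ∈ Φ := hPiΦ hxPi
  rcases (hdomPi x hxPi).eq_or_lt with hvx0 | hvx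
  · -- Case A: x is orthogonal to v
    have hge := hcond1 x hxΦ (mem_posCone_self hxPi) hvx0.symm
    rw [inner_neg_left] at hβx
    linarith
  · -- Case B
    have hx0 : x ≠ 0 := fun h => h0 (h ▸ hxΦ)
    have hnx : 0 < ⟪x, x⟫ := inner_self_pos' hx0
    obtain ⟨q, hq⟩ := hcrys x hxΦ v hvΦ
    obtain ⟨r, hr⟩ := hcrys (-w) hβΦ x hxΦ
    have hxv : ⟪x, v⟫ = ⟪v, x⟫ := real_inner_comm v x
    have hq' : 2 * ⟪v, x⟫ = (q : ℝ) * ⟪v, v⟫ := by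
      rw [← hxv]; exact (div_eq_iff hnv.ne').mp hq
    have hr' : 2 * ⟪-w, x⟫ = (r : ℝ) * ⟪x, x⟫ := (div_eq_iff hnx.ne').mp hr
    have hq1 : 1 ≤ (q : ℝ) := int_coeff_ge_one hq' hvx hnv
    have hr1 : 1 ≤ (r : ℝ) := int_coeff_ge_one hr' hβx hnx
    set β' := -w - (r : ℝ) • x with hβ'def
    have hβ'Φ : β' ∈ Φ := by
      have h := hrefl x hxΦ (-w) hβΦ
      rw [sref_apply', hr] at h
      exact h
    -- -w has support besides x
    have hy : ∃ y ∈ Pi, y ≠ x ∧ 0 < c y := by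
      by_contra hno
      push_neg at hno
      have hall : ∀ y ∈ Pi, y ≠ x → c y = 0 := fun y hy hyx =>
        le_antisymm (hno y hy hyx) (hc0 y)
      have hcx' : -w = c x • x := by
        rw [hcβ, Finset.sum_eq_single x]
        · intro z hz hzx; rw [hall z hz hzx, zero_smul]
        · intro h; exact absurd hxPi h
      rcases hred x hxΦ (c x) (by rw [← hcx']; exact hβΦ) with h1 | h1
      · rw [h1, one_smul] at hcx'
        exact hβPi (hcx' ▸ hxPi)
      · rw [h1] at hcx; norm_num at hcx
    obtain ⟨y, hyPi, hyx, hcy⟩ := hy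
    -- β' is a positive root
    have hβ'pos : β' ∈ posCone Pi := by
      rcases hsplit β' hβ'Φ with h | h
      · exact h
      · exfalso
        obtain ⟨d, hd0, hdeq⟩ := h
        have key : ∑ z ∈ Pi, (d z + c z) • z
            = ∑ z ∈ Pi, (if z = x then (r : ℝ) else 0) • z := by
          rw [sum_indicator_smul Pi hxPi]
          calc ∑ z ∈ Pi, (d z + c z) • z
              = (∑ z ∈ Pi, d z • z) + ∑ z ∈ Pi, c z • z := by
                rw [← Finset.sum_add_distrib]
                exact Finset.sum_congr rfl fun z _ => add_smul _ _ _
            _ = -β' + -w := by rw [← hdeq, ← hcβ]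
            _ = (r : ℝ) • x := by rw [hβ'def]; module
        have hone := coeff_unique hind key y hyPi
        rw [if_neg hyx] at hone
        have := hd0 y
        linarith
    have hvβ'0 : 0 ≤ ⟪v, β'⟫ := hdom β' hβ'Φ hβ'pos
    have hvβ'eq : ⟪v, β'⟫ = ⟪v, -w⟫ - (r : ℝ) * ⟪v, x⟫ := by
      rw [hβ'def, inner_sub_right, real_inner_smul_right]
    have hvnw : ⟪v, -w⟫ = -⟪v, w⟫ := inner_neg_right v w
    have hvwval : ⟪v, -w⟫ = ⟪v, v⟫ / 2 := by rw [hvnw]; linarith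
    -- r * q ≤ 1, hence r = q = 1
    have hmul : (r : ℝ) * (2 * ⟪v, x⟫) = (r : ℝ) * ((q : ℝ) * ⟪v, v⟫) := by rw [hq']
    have hrqN : (r : ℝ) * (q : ℝ) * ⟪v, v⟫ ≤ 1 * ⟪v, v⟫ := by nlinarith [hvβ'0, hvβ'eq, hvwval, hmul]
    have hrq : (r : ℝ) * (q : ℝ) ≤ 1 := (mul_le_mul_iff_of_pos_right hnv).mp hrqN
    have hr1' : (r : ℝ) = 1 := by
      have h1 : (r : ℝ) * 1 ≤ (r : ℝ) * (q : ℝ) :=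
        mul_le_mul_of_nonneg_left hq1 (by linarith)
      rw [mul_one] at h1
      linarith
    have hq1' : (q : ℝ) = 1 := by
      have h1 : 1 * (q : ℝ) ≤ (r : ℝ) * (q : ℝ) :=
        mul_le_mul_of_nonneg_right hr1 (by linarith)
      rw [one_mul] at h1
      linarith
    have hvx2 : 2 * ⟪v, x⟫ = ⟪v, v⟫ := by rw [hq1'] at hq'; linarith
    have hβx2 : 2 * ⟪-w, x⟫ = ⟪x, x⟫ := by rw [hr1'] at hr'; linarith
    have hvβ'zero : ⟪v, β'⟫ = 0 := by
      rw [hvβ'eq, hr1']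
      linarith
    -- same lengths: ⟪x,x⟫ = ⟪v,v⟫
    obtain ⟨p, hp⟩ := hcrys v hvΦ x hxΦ
    obtain ⟨s, hs⟩ := hcrys x hxΦ (-w) hβΦ
    have hp' : 2 * ⟪v, x⟫ = (p : ℝ) * ⟪x, x⟫ := (div_eq_iff hnx.ne').mp hp
    have hxnw : ⟪x, -w⟫ = ⟪-w, x⟫ := real_inner_comm (-w) x
    have hs' : 2 * ⟪-w, x⟫ = (s : ℝ) * ⟪v, v⟫ := by
      rw [← hxnw, ← hww']
      exact (div_eq_iff (by rw [hww']; exact hnv.ne')).mp hs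
    have hp1 : 1 ≤ (p : ℝ) := int_coeff_ge_one hp' hvx hnx
    have hs1 : 1 ≤ (s : ℝ) := int_coeff_ge_one hs' hβx hnv
    have hpfact : (p : ℝ) * ⟪x, x⟫ = ⟪v, v⟫ := by linarith
    have hsfact : (s : ℝ) * ⟪v, v⟫ = ⟪x, x⟫ := by linarith
    have hxxN : ⟪x, x⟫ = ⟪v, v⟫ := by
      have hle : ⟪x, x⟫ ≤ ⟪v, v⟫ := by
        have h1 : 1 * ⟪x, x⟫ ≤ (p : ℝ) * ⟪x, x⟫ :=
          mul_le_mul_of_nonneg_right hp1 hnx.le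
        rw [one_mul] at h1
        linarith
      have hge : ⟪v, v⟫ ≤ ⟪x, x⟫ := by
        have h1 : 1 * ⟪v, v⟫ ≤ (s : ℝ) * ⟪v, v⟫ :=
          mul_le_mul_of_nonneg_right hs1 hnv.le
        rw [one_mul] at h1
        linarith
      linarith
    -- final contradiction via the m = 1 condition applied to β'
    have hfinal := hcond1 β' hβ'Φ hβ'pos hvβ'zero
    have hwβ' : ⟪w, β'⟫ = -⟪-w, β'⟫ := by rw [inner_neg_left]; ring
    have hnwβ' : ⟪-w, β'⟫ = ⟪-w, -w⟫ - (r : ℝ) * ⟪-w, x⟫ := by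
      rw [hβ'def, inner_sub_right, real_inner_smul_right]
    rw [hr1', hww'] at hnwβ'
    have hpos' : ⟪-w, β'⟫ = ⟪v, v⟫ / 2 := by rw [hnwβ']; linarith
    rw [hwβ', hpos'] at hfinal
    linarith
end
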